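/- Let 𝒜 be a central S-ring over a finite group G and let m be an integer coprime to |G|. Then the map X ↦ X^{(m)} is a bijection of the set of basic sets 𝒮(𝒜) onto itself; in particular, for every basic set X of 𝒜, the set X^{(m)} is again a basic set of 𝒜. -/

import Mathlib

open scoped Pointwise

/-- The sum `X̲ = ∑_{x ∈ X} x` of a subset `X` of `G`, as an element of the
integral group ring `ℤG = MonoidAlgebra ℤ G`. -/
noncomputable def clsSum {G : Type*} [Group G] [DecidableEq G] (X : Finset G) : MonoidAlgebra ℤ G :=
  ∑ x ∈ X, MonoidAlgebra.single x 1

/-- A Schur ring (S-ring) over a finite group `G`: a partition `S` of `G` into nonempty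
classes such that `{1} ∈ S`, `S` is closed under taking inverses of classes, and the
`ℤ`-span of the class sums is closed under multiplication (hence a subring of `ℤG`). -/
structure SRing (G : Type*) [Group G] [Fintype G] [DecidableEq G] where
  S : Finset (Finset G)
  nonempty_mem : ∀ X ∈ S, X.Nonempty
  cover : ∀ g : G, ∃! X : Finset G, X ∈ S ∧ g ∈ X
  one_mem : ({1} : Finset G) ∈ S
  inv_mem : ∀ X ∈ S, X⁻¹ ∈ S
  mul_closed : ∀ ξ η : MonoidAlgebra ℤ G,
    ξ ∈ Submodule.span ℤ (clsSum '' (S : Set (Finset G))) →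
    η ∈ Submodule.span ℤ (clsSum '' (S : Set (Finset G))) →
    ξ * η ∈ Submodule.span ℤ (clsSum '' (S : Set (Finset G)))

namespace SRing

variable {G : Type*} [Group G] [Fintype G] [DecidableEq G]

/-- The underlying `ℤ`-module of the S-ring `A` inside `ℤG`. -/
noncomputable def span (A : SRing G) : Submodule ℤ (MonoidAlgebra ℤ G) :=
  Submodule.span ℤ (clsSum '' (A.S : Set (Finset G)))

/-- An S-ring is central if it is contained in the center of `ℤG`. -/
def IsCentral (A : SRing G) : Prop :=
  ∀ ξ ∈ A.span, ∀ η : MonoidAlgebra ℤ G, ξ * η = η * ξ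

/-- A set `T ⊆ G` is an `A`-set if it is a union of basic sets of `A`. -/
def IsASet (A : SRing G) (T : Set G) : Prop :=
  ∀ X ∈ A.S, (∃ x ∈ X, x ∈ T) → ∀ x ∈ X, x ∈ T

/-- An S-ring is primitive if its only `A`-subgroups are trivial. -/
def IsPrimitive (A : SRing G) : Prop :=
  ∀ H : Subgroup G, A.IsASet (H : Set G) → H = ⊥ ∨ H = ⊤

end SRing

section Aux

variable {G : Type*} [Group G] [Fintype G] [DecidableEq G]

lemma clsSum_apply (X : Finset G) (g : G) :
    (clsSum X).coeff g = if g ∈ X then 1 else 0 := by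
  classical
  rw [clsSum, MonoidAlgebra.coeff_sum, Finsupp.finset_sum_apply]
  simp only [MonoidAlgebra.single_apply]
  exact Finset.sum_ite_eq' X g (fun _ => (1 : ℤ))

lemma clsSum_mem_span (A : SRing G) {X : Finset G} (hX : X ∈ A.S) : clsSum X ∈ A.span :=
  Submodule.subset_span ⟨X, by simpa using hX, rfl⟩

lemma basic_eq_of_mem (A : SRing G) {Y Z : Finset G} (hY : Y ∈ A.S) (hZ : Z ∈ A.S)
    {a : G} (ha : a ∈ Y) (ha' : a ∈ Z) : Y = Z := by
  obtain ⟨X, -, hu⟩ := A.cover a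
  rw [hu Y ⟨hY, ha⟩, hu Z ⟨hZ, ha'⟩]

lemma span_coeff_const (A : SRing G) {η : MonoidAlgebra ℤ G} (hη : η ∈ A.span) :
    ∀ Y ∈ A.S, ∀ a ∈ Y, ∀ b ∈ Y, η.coeff a = η.coeff b := by
  refine Submodule.span_induction ?_ ?_ ?_ ?_ hη
  · rintro x ⟨Z, hZ, rfl⟩ Y hY a ha b hb
    simp only [Finset.mem_coe] at hZ
    rw [clsSum_apply, clsSum_apply]
    by_cases haZ : a ∈ Z
    · rw [if_pos haZ, if_pos]
      have := basic_eq_of_mem A hY hZ ha haZ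
      exact this ▸ hb
    · rw [if_neg haZ, if_neg]
      intro hbZ
      exact haZ ((basic_eq_of_mem A hY hZ hb hbZ) ▸ ha)
  · intro Y hY a ha b hb; rfl
  · intro x y hx hy ihx ihy Y hY a ha b hb
    show x.coeff a + y.coeff a = x.coeff b + y.coeff b
    rw [ihx Y hY a ha b hb, ihy Y hY a ha b hb]
  · intro c x hx ih Y hY a ha b hb
    show c • x.coeff a = c • x.coeff b
    rw [ih Y hY a ha b hb]

lemma pow_mem_span (A : SRing G) {ξ : MonoidAlgebra ℤ G} (hξ : ξ ∈ A.span) :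
    ∀ k, 1 ≤ k → ξ ^ k ∈ A.span := by
  intro k hk
  induction k with
  | zero => omega
  | succ k ih =>
    rcases Nat.eq_zero_or_pos k with rfl | hpos
    · simpa using hξ
    · rw [pow_succ]
      exact A.mul_closed _ _ (ih hpos) hξ

lemma central_conj_apply (A : SRing G) (hA : A.IsCentral) {ξ : MonoidAlgebra ℤ G}
    (hξ : ξ ∈ A.span) (u g : G) : ξ.coeff (u * g * u⁻¹) = ξ.coeff g := by
  have h := hA ξ hξ (MonoidAlgebra.single u 1)
  have h2 := congrArg (fun f : MonoidAlgebra ℤ G => f.coeff (u * g)) h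
  simp only [MonoidAlgebra.mul_single_apply, MonoidAlgebra.single_mul_apply, one_mul,
    mul_one] at h2
  simpa [mul_assoc] using h2

lemma basic_conj_mem (A : SRing G) (hA : A.IsCentral) {X : Finset G} (hX : X ∈ A.S)
    {g : G} (hg : g ∈ X) (u : G) : u * g * u⁻¹ ∈ X := by
  have h := central_conj_apply A hA (clsSum_mem_span A hX) u g
  rw [clsSum_apply, clsSum_apply] at h
  by_contra hc
  rw [if_neg hc, if_pos hg] at h
  exact zero_ne_one h

end Aux

section Tuples

variable {G : Type*} [Group G] [Fintype G] [DecidableEq G]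

/-- number of `k`-tuples with entries in `X` and product `h` -/
def Ncnt (X : Finset G) (k : ℕ) (h : G) : ℕ :=
  ((Fintype.piFinset (fun _ : Fin k => X)).filter (fun v => (List.ofFn v).prod = h)).card

lemma clsSum_pow (X : Finset G) (k : ℕ) :
    clsSum X ^ k
      = ∑ v ∈ Fintype.piFinset (fun _ : Fin k => X),
          MonoidAlgebra.single (List.ofFn v).prod (1 : ℤ) := by
  induction k with
  | zero =>
    rw [pow_zero]
    have huniv : (Fintype.piFinset (fun _ : Fin 0 => X)) = {(fun i => i.elim0)} := by
      apply Finset.eq_singleton_iff_unique_mem.2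
      exact ⟨Fintype.mem_piFinset.2 fun i => i.elim0, fun v _ => funext fun i => i.elim0⟩
    rw [huniv, Finset.sum_singleton]
    simp [MonoidAlgebra.one_def]
  | succ k ih =>
    rw [pow_succ', ih, clsSum, Finset.sum_mul_sum]
    rw [← Finset.sum_product']
    refine Finset.sum_nbij' (fun q => Fin.cons q.1 q.2) (fun w => (w 0, Fin.tail w))
      ?_ ?_ ?_ ?_ ?_
    · rintro ⟨x, v⟩ hq
      simp only [Finset.mem_product, Fintype.mem_piFinset] at hq ⊢
      intro i
      rcases i.eq_zero_or_eq_succ with rfl | ⟨j, rfl⟩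
      · simpa using hq.1
      · simpa using hq.2 j
    · intro w hw
      simp only [Fintype.mem_piFinset] at hw
      simp only [Finset.mem_product, Fintype.mem_piFinset]
      exact ⟨hw 0, fun i => hw i.succ⟩
    · rintro ⟨x, v⟩ hq
      simp [Fin.tail_cons]
    · intro w hw
      simp [Fin.cons_self_tail]
    · rintro ⟨x, v⟩ hq
      rw [MonoidAlgebra.single_mul_single, one_mul]
      congr 1
      rw [List.ofFn_succ]
      simp [Fin.cons_zero, Fin.cons_succ]

lemma clsSum_pow_apply (X : Finset G) (k : ℕ) (h : G) :
    (clsSum X ^ k).coeff h = (Ncnt X k h : ℤ) := by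
  rw [clsSum_pow, MonoidAlgebra.coeff_sum, Finsupp.finset_sum_apply]
  simp only [MonoidAlgebra.single_apply]
  rw [Finset.sum_boole]
  rfl

lemma prod_map_conj (u : G) : ∀ l : List G,
    (l.map fun x => u * x * u⁻¹).prod = u * l.prod * u⁻¹
  | [] => by simp
  | a :: l => by
    rw [List.map_cons, List.prod_cons, prod_map_conj u l, List.prod_cons]
    group

lemma Ncnt_conj {X : Finset G} (hXc : ∀ g ∈ X, ∀ u : G, u * g * u⁻¹ ∈ X) (k : ℕ)
    (u h : G) : Ncnt X k (u * h * u⁻¹) = Ncnt X k h := by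
  unfold Ncnt
  symm
  refine Finset.card_bij' (fun v _ => fun i => u * v i * u⁻¹)
    (fun v _ => fun i => u⁻¹ * v i * u⁻¹⁻¹) ?_ ?_ ?_ ?_
  · intro v hv
    simp only [Finset.mem_filter, Fintype.mem_piFinset] at hv ⊢
    refine ⟨fun i => hXc _ (hv.1 i) u, ?_⟩
    have h1 : (List.ofFn fun i => u * v i * u⁻¹) = (List.ofFn v).map (fun x => u * x * u⁻¹) := by
      rw [List.map_ofFn]; rfl
    rw [h1, prod_map_conj, hv.2]
  · intro v hv
    simp only [Finset.mem_filter, Fintype.mem_piFinset] at hv ⊢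
    refine ⟨fun i => hXc _ (hv.1 i) u⁻¹, ?_⟩
    have h1 : (List.ofFn fun i => u⁻¹ * v i * u⁻¹⁻¹) = (List.ofFn v).map (fun x => u⁻¹ * x * u⁻¹⁻¹) := by
      rw [List.map_ofFn]; rfl
    rw [h1, prod_map_conj, hv.2]
    group
  · intro v _; funext i; group
  · intro v _; funext i; group

lemma card_prodInD (X D : Finset G) (k : ℕ) :
    ((Fintype.piFinset fun _ : Fin k => X).filter (fun v => (List.ofFn v).prod ∈ D)).card
      = ∑ d ∈ D, Ncnt X k d := by
  rw [Finset.card_eq_sum_card_fiberwise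
    (f := fun v : Fin k → G => (List.ofFn v).prod) (t := D)
    (s := (Fintype.piFinset fun _ : Fin k => X).filter (fun v => (List.ofFn v).prod ∈ D))
    (fun v hv => (Finset.mem_filter.1 hv).2)]
  refine Finset.sum_congr rfl fun d hd => ?_
  unfold Ncnt
  congr 1
  rw [Finset.filter_filter]
  refine Finset.filter_congr fun v _ => ?_
  constructor
  · rintro ⟨-, h⟩; exact h
  · intro h
    refine ⟨?_, h⟩
    show (List.ofFn v).prod ∈ D
    rw [h]; exact hd

end Tuples

section Rotation

lemma rot_prod_conj {G : Type*} [Group G] {p : ℕ} [NeZero p] (v : Fin p → G) :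
    (List.ofFn fun i => v (i + 1)).prod = (v 0)⁻¹ * (List.ofFn v).prod * v 0 := by
  obtain ⟨k, rfl⟩ : ∃ k, p = k + 1 := ⟨p - 1, (Nat.succ_pred_eq_of_pos (NeZero.pos p)).symm⟩
  rw [List.ofFn_succ' (f := fun i => v (i + 1)), List.ofFn_succ (f := v)]
  have h1 : Fin.last k + 1 = 0 := Fin.last_add_one k
  have h2 : ∀ i : Fin k, (i.castSucc + 1 : Fin (k + 1)) = i.succ := by
    intro i
    apply Fin.ext
    rw [Fin.val_add_one_of_lt (Fin.castSucc_lt_last i)]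
    simp
  simp only [h1, h2]
  rw [List.prod_concat, List.prod_cons]
  group

open Fin.NatCast in
lemma rot_card_modEq {α : Type*} [DecidableEq α] {p : ℕ} [NeZero p] (hp : p.Prime)
    (A : Finset (Fin p → α)) (hrot : ∀ v ∈ A, (fun i => v (i + 1)) ∈ A) :
    A.card ≡ (A.filter fun v => ∀ i, v i = v 0).card [MOD p] := by
  haveI : Fact p.Prime := ⟨hp⟩
  set e : Equiv.Perm (Fin p → α) :=
    Equiv.arrowCongr (Equiv.addRight (1 : Fin p)).symm (Equiv.refl α) with he
  have he_apply : ∀ (v : Fin p → α) i, e v i = v (i + 1) := fun v i => rfl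
  have himg : Finset.image (⇑e) A = A := by
    apply Finset.eq_of_subset_of_card_le
    · intro w hw
      obtain ⟨v, hv, rfl⟩ := Finset.mem_image.1 hw
      have h := hrot v hv
      have : ⇑e v = fun i => v (i + 1) := funext fun i => he_apply v i
      rwa [this]
    · rw [Finset.card_image_of_injective _ e.injective]
  have hstab : ∀ v, v ∈ A ↔ e v ∈ A := by
    intro v
    constructor
    · intro hv; rw [← himg]; exact Finset.mem_image_of_mem _ hv
    · intro hv
      rw [← himg] at hv
      obtain ⟨w, hw, hwe⟩ := Finset.mem_image.1 hv
      rwa [← e.injective hwe]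
  set eA : Equiv.Perm {v // v ∈ A} := e.subtypePerm (fun v => (hstab v).symm) with heA
  have hepow : ∀ (n : ℕ) (v : Fin p → α) (i : Fin p), (e ^ n) v i = v (i + n) := by
    intro n
    induction n with
    | zero => intro v i; simp
    | succ n ih =>
      intro v i
      rw [pow_succ, Equiv.Perm.mul_apply, ih (e v) i, he_apply, Nat.cast_add, Nat.cast_one,
        add_assoc]
  have hep : e ^ p = 1 := by
    apply Equiv.ext
    intro v
    funext i
    rw [hepow p v i, Fin.natCast_self, add_zero]
    rfl
  have heAp : eA ^ p = 1 := by
    apply Equiv.ext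
    intro x
    apply Subtype.ext
    rw [heA, Equiv.Perm.subtypePerm_pow]
    show (e ^ p) (x : Fin p → α) = _
    rw [hep]
    rfl
  have hH : IsPGroup p (Subgroup.zpowers eA) := by
    intro g
    refine ⟨1, ?_⟩
    rw [pow_one]
    obtain ⟨j, hj⟩ := Subgroup.mem_zpowers_iff.1 g.2
    apply Subtype.ext
    rw [SubmonoidClass.coe_pow, OneMemClass.coe_one, ← hj, ← zpow_natCast (eA ^ j) p,
      ← zpow_mul, mul_comm, zpow_mul, zpow_natCast, heAp, one_zpow]
  have hmod := hH.card_modEq_card_fixedPoints {v // v ∈ A}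
  have hfix : ∀ a : {v // v ∈ A},
      a ∈ MulAction.fixedPoints (Subgroup.zpowers eA) {v // v ∈ A}
        ↔ ∀ i, (a : Fin p → α) i = (a : Fin p → α) 0 := by
    intro a
    constructor
    · intro ha i
      have h1 : eA a = a := by
        have h0 := ha ⟨eA, Subgroup.mem_zpowers eA⟩
        rw [Subgroup.smul_def] at h0
        exact h0
      have h2 : ∀ i : Fin p, (a : Fin p → α) (i + 1) = (a : Fin p → α) i := by
        intro i
        have h3 := congrArg Subtype.val h1
        have h4 : (eA a : Fin p → α) = e (a : Fin p → α) := rfl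
        rw [h4] at h3
        have := congrFun h3 i
        rwa [he_apply] at this
      have h5 : ∀ j : ℕ, (a : Fin p → α) (j : Fin p) = (a : Fin p → α) 0 := by
        intro j
        induction j with
        | zero => norm_num
        | succ j ih =>
          have : ((j + 1 : ℕ) : Fin p) = (j : Fin p) + 1 := by push_cast; rfl
          rw [this, h2, ih]
      have := h5 i.val
      rwa [Fin.cast_val_eq_self] at this
    · intro hconst
      have hfixe : eA a = a := by
        apply Subtype.ext
        funext i
        show e (a : Fin p → α) i = _
        rw [he_apply, hconst (i + 1), hconst i]
      intro h
      obtain ⟨j, hj⟩ := Subgroup.mem_zpowers_iff.1 h.2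
      have hstab' : eA ∈ MulAction.stabilizer (Equiv.Perm {v // v ∈ A}) a := by
        rw [MulAction.mem_stabilizer_iff, Equiv.Perm.smul_def, hfixe]
      have hj' : (h : Equiv.Perm {v // v ∈ A}) ∈
          MulAction.stabilizer (Equiv.Perm {v // v ∈ A}) a := by
        rw [← hj]; exact zpow_mem hstab' j
      rw [Subgroup.smul_def]
      rw [MulAction.mem_stabilizer_iff, Equiv.Perm.smul_def] at hj'
      rw [Equiv.Perm.smul_def]
      exact hj'
  have hcard2 : Nat.card (MulAction.fixedPoints (Subgroup.zpowers eA) {v // v ∈ A})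
      = (A.filter fun v => ∀ i, v i = v 0).card := by
    rw [← Nat.card_eq_finsetCard]
    apply Nat.card_congr
    refine ⟨fun a => ⟨(a : {v // v ∈ A}), Finset.mem_filter.2 ⟨(a : {v // v ∈ A}).2,
        (hfix _).1 a.2⟩⟩,
      fun b => ⟨⟨b.1, (Finset.mem_filter.1 b.2).1⟩, (hfix _).2 (Finset.mem_filter.1 b.2).2⟩,
      ?_, ?_⟩
    · intro a; apply Subtype.ext; apply Subtype.ext; rfl
    · intro b; apply Subtype.ext; rfl
  calc A.card = Nat.card {v // v ∈ A} := (Nat.card_eq_finsetCard A).symm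
    _ ≡ Nat.card (MulAction.fixedPoints (Subgroup.zpowers eA) {v // v ∈ A}) [MOD p] := hmod
    _ = _ := hcard2

end Rotation

section Conj

variable {G : Type*} [Group G] [Fintype G] [DecidableEq G]

def conjCl (g : G) : Finset G := Finset.univ.filter (fun d => ∃ u : G, u * g * u⁻¹ = d)

lemma mem_conjCl {g d : G} : d ∈ conjCl g ↔ ∃ u : G, u * g * u⁻¹ = d := by
  simp [conjCl]

lemma self_mem_conjCl (g : G) : g ∈ conjCl g := mem_conjCl.2 ⟨1, by group⟩

lemma conjCl_conj_mem {g d : G} (hd : d ∈ conjCl g) (w : G) : w * d * w⁻¹ ∈ conjCl g := by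
  obtain ⟨u, rfl⟩ := mem_conjCl.1 hd
  exact mem_conjCl.2 ⟨w * u, by group⟩

lemma card_conjCl_dvd (g : G) : (conjCl g).card ∣ Fintype.card G := by
  have hset : ((conjCl g : Finset G) : Set G) = MulAction.orbit (ConjAct G) g := by
    ext d
    rw [Finset.mem_coe, mem_conjCl, ConjAct.mem_orbit_conjAct, isConj_comm, isConj_iff]
  have h2 : Nat.card (MulAction.orbit (ConjAct G) g) = (conjCl g).card := by
    rw [← hset, Nat.card_coe_set_eq, Set.ncard_coe_finset]
  have h3 : Nat.card (MulAction.orbit (ConjAct G) g)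
      = (MulAction.stabilizer (ConjAct G) g).index := by
    rw [Nat.card_congr (MulAction.orbitEquivQuotientStabilizer (ConjAct G) g)]
    rfl
  have h4 : (MulAction.stabilizer (ConjAct G) g).index ∣ Nat.card (ConjAct G) :=
    Subgroup.index_dvd_card _
  have h5 : Nat.card (ConjAct G) = Fintype.card G := Nat.card_eq_fintype_card
  rw [← h2, h3, ← h5]
  exact h4

end Conj

section KeyStep

variable {G : Type*} [Group G] [Fintype G] [DecidableEq G]

lemma pow_coprime_inj {k : ℕ} (hk : Nat.Coprime k (Fintype.card G)) :
    Function.Injective (fun x : G => x ^ k) := by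
  have hcop : (Nat.card G).Coprime k := by
    rw [Nat.card_eq_fintype_card, Nat.coprime_comm]; exact hk
  have h : ⇑(powCoprime hcop) = fun x : G => x ^ k := funext fun g => powCoprime_apply hcop g
  rw [← h]; exact (powCoprime hcop).injective

lemma const_filter_card (X D : Finset G) {p : ℕ} [NeZero p] :
    (((Fintype.piFinset fun _ : Fin p => X).filter
        (fun v => (List.ofFn v).prod ∈ D)).filter (fun v => ∀ i, v i = v 0)).card
      = (X.filter fun x => x ^ p ∈ D).card := by
  refine Finset.card_bij' (fun v _ => v 0) (fun x _ => fun _ => x) ?_ ?_ ?_ ?_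
  · intro v hv
    simp only [Finset.mem_filter, Fintype.mem_piFinset] at hv
    obtain ⟨⟨hmem, hprod⟩, hconst⟩ := hv
    refine Finset.mem_filter.2 ⟨hmem 0, ?_⟩
    have hofn : List.ofFn v = List.replicate p (v 0) := by
      rw [List.eq_replicate_iff]
      refine ⟨by simp, ?_⟩
      intro b hb
      obtain ⟨i, rfl⟩ := Set.mem_range.1 ((List.mem_ofFn' _ _).1 hb)
      exact hconst i
    rwa [hofn, List.prod_replicate] at hprod
  · intro x hx
    simp only [Finset.mem_filter] at hx
    refine Finset.mem_filter.2 ⟨Finset.mem_filter.2 ⟨?_, ?_⟩, fun i => rfl⟩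
    · exact Fintype.mem_piFinset.2 fun _ => hx.1
    · rw [List.ofFn_const, List.prod_replicate]; exact hx.2
  · intro v hv
    simp only [Finset.mem_filter] at hv
    exact funext fun i => (hv.2 i).symm
  · intro x hx; rfl

lemma key_dichotomy (A : SRing G) (hA : A.IsCentral) {p : ℕ} (hp : p.Prime)
    (hpn : ¬ p ∣ Fintype.card G) {X : Finset G} (hX : X ∈ A.S)
    {Y : Finset G} (hY : Y ∈ A.S) {g g' : G} (hg : g ∈ Y) (hg' : g' ∈ Y)
    (hgim : g ∈ X.image (fun x => x ^ p)) : g' ∈ X.image (fun x => x ^ p) := by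
  haveI : NeZero p := ⟨hp.pos.ne'⟩
  have hinj : Function.Injective (fun x : G => x ^ p) :=
    pow_coprime_inj ((hp.coprime_iff_not_dvd).2 hpn)
  have hXc : ∀ x ∈ X, ∀ u : G, u * x * u⁻¹ ∈ X := fun x hx u => basic_conj_mem A hA hX hx u
  have hNY : Ncnt X p g = Ncnt X p g' := by
    have h1 := span_coeff_const A (pow_mem_span A (clsSum_mem_span A hX) p hp.one_lt.le)
      Y hY g hg g' hg'
    rw [clsSum_pow_apply, clsSum_pow_apply] at h1
    exact_mod_cast h1
  have hkey : ∀ h : G, ((conjCl h).card * Ncnt X p h)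
      ≡ (X.filter fun x => x ^ p ∈ conjCl h).card [MOD p] := by
    intro h
    have hconst : ∀ d ∈ conjCl h, Ncnt X p d = Ncnt X p h := by
      intro d hd
      obtain ⟨u, rfl⟩ := mem_conjCl.1 hd
      exact Ncnt_conj hXc p u h
    have hsum : ((Fintype.piFinset fun _ : Fin p => X).filter
        (fun v => (List.ofFn v).prod ∈ conjCl h)).card = (conjCl h).card * Ncnt X p h := by
      rw [card_prodInD, Finset.sum_congr rfl hconst, Finset.sum_const, smul_eq_mul]
    have hrot : ∀ v ∈ (Fintype.piFinset fun _ : Fin p => X).filter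
        (fun v => (List.ofFn v).prod ∈ conjCl h),
        (fun i => v (i + 1)) ∈ (Fintype.piFinset fun _ : Fin p => X).filter
        (fun v => (List.ofFn v).prod ∈ conjCl h) := by
      intro v hv
      simp only [Finset.mem_filter, Fintype.mem_piFinset] at hv ⊢
      refine ⟨fun i => hv.1 (i + 1), ?_⟩
      rw [rot_prod_conj]
      have := conjCl_conj_mem hv.2 (v 0)⁻¹
      rwa [inv_inv] at this
    have hmod := rot_card_modEq hp _ hrot
    rw [hsum, const_filter_card] at hmod
    exact hmod
  obtain ⟨x0, hx0X, hx0⟩ := Finset.mem_image.1 hgim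
  have hfg : (X.filter fun x => x ^ p ∈ conjCl g) = conjCl x0 := by
    ext x
    simp only [Finset.mem_filter]
    constructor
    · rintro ⟨hxX, hxp⟩
      obtain ⟨u, hu⟩ := mem_conjCl.1 hxp
      have hx : x ^ p = (u * x0 * u⁻¹) ^ p := by
        rw [conj_pow, hx0, hu]
      exact mem_conjCl.2 ⟨u, (hinj hx).symm⟩
    · intro hx
      obtain ⟨u, rfl⟩ := mem_conjCl.1 hx
      refine ⟨hXc x0 hx0X u, ?_⟩
      rw [conj_pow, hx0]
      exact mem_conjCl.2 ⟨u, rfl⟩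
  by_contra hng'
  have hfg' : (X.filter fun x => x ^ p ∈ conjCl g') = ∅ := by
    rw [Finset.eq_empty_iff_forall_notMem]
    intro x hx
    rw [Finset.mem_filter] at hx
    obtain ⟨hxX, hxp⟩ := hx
    obtain ⟨u, hu⟩ := mem_conjCl.1 hxp
    apply hng'
    refine Finset.mem_image.2 ⟨u⁻¹ * x * u⁻¹⁻¹, hXc x hxX u⁻¹, ?_⟩
    show (u⁻¹ * x * u⁻¹⁻¹) ^ p = g'
    rw [conj_pow, ← hu]
    group
  have h1 := hkey g
  rw [hfg] at h1
  have h2 := hkey g'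
  rw [hfg', Finset.card_empty] at h2
  have hpg' : p ∣ (conjCl g').card * Ncnt X p g' := (Nat.modEq_zero_iff_dvd).1 h2
  have hnd : ¬ p ∣ (conjCl g').card := fun hd => hpn (hd.trans (card_conjCl_dvd g'))
  have hpN : p ∣ Ncnt X p g' := (hp.dvd_mul.1 hpg').resolve_left hnd
  rw [← hNY] at hpN
  have hL : p ∣ (conjCl g).card * Ncnt X p g := Dvd.dvd.mul_left hpN _
  have hx0dvd : p ∣ (conjCl x0).card :=
    (Nat.modEq_zero_iff_dvd).1 (h1.symm.trans (Nat.modEq_zero_iff_dvd.2 hL))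
  exact hpn (hx0dvd.trans (card_conjCl_dvd x0))

end KeyStep

section Partition

variable {G : Type*} [Group G] [Fintype G] [DecidableEq G]

lemma image_basic_mem (A : SRing G) (σ : G → G) (hσ : Function.Injective σ)
    (hU : ∀ X ∈ A.S, ∀ Y ∈ A.S, ∀ g ∈ Y, ∀ g' ∈ Y, g ∈ X.image σ → g' ∈ X.image σ) :
    ∀ X ∈ A.S, X.image σ ∈ A.S := by
  classical
  have hf : ∀ X : Finset G, ∃ Z : Finset G,
      X ∈ A.S → (Z ∈ A.S ∧ Z ⊆ X.image σ ∧ Z.Nonempty) := by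
    intro X
    by_cases hX : X ∈ A.S
    · obtain ⟨x, hx⟩ := A.nonempty_mem X hX
      obtain ⟨Z, ⟨hZS, hZmem⟩, -⟩ := A.cover (σ x)
      refine ⟨Z, fun _ => ⟨hZS, ?_, ⟨σ x, hZmem⟩⟩⟩
      intro z hz
      exact hU X hX Z hZS (σ x) hZmem z hz (Finset.mem_image_of_mem σ hx)
    · exact ⟨∅, fun h => absurd h hX⟩
  choose f hfspec using hf
  have hfS : ∀ X ∈ A.S, f X ∈ A.S := fun X hX => (hfspec X hX).1
  have hfsub : ∀ X ∈ A.S, f X ⊆ X.image σ := fun X hX => (hfspec X hX).2.1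
  have hfne : ∀ X ∈ A.S, (f X).Nonempty := fun X hX => (hfspec X hX).2.2
  have hinj : ∀ X ∈ A.S, ∀ X' ∈ A.S, f X = f X' → X = X' := by
    intro X hX X' hX' heq
    obtain ⟨z, hz⟩ := hfne X hX
    obtain ⟨x, hxX, hxz⟩ := Finset.mem_image.1 (hfsub X hX hz)
    have hz' : z ∈ f X' := heq ▸ hz
    obtain ⟨x', hx'X, hx'z⟩ := Finset.mem_image.1 (hfsub X' hX' hz')
    have hxx : x = x' := hσ (by rw [hxz, hx'z])
    exact basic_eq_of_mem A hX hX' hxX (hxx ▸ hx'X)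
  have hbasic_eq : ∀ Z ∈ A.S, (Finset.univ.filter
      (fun g : G => (A.cover g).choose = Z)) = Z := by
    intro Z hZ
    ext g
    simp only [Finset.mem_filter, Finset.mem_univ, true_and]
    constructor
    · intro h
      have hc := (A.cover g).choose_spec.1
      rw [h] at hc
      exact hc.2
    · intro hgZ
      exact ((A.cover g).choose_spec.2 Z ⟨hZ, hgZ⟩).symm
  have hsum1 : ∑ Z ∈ A.S, Z.card = Fintype.card G := by
    rw [← Finset.card_univ,
      Finset.card_eq_sum_card_fiberwise (f := fun g : G => (A.cover g).choose) (t := A.S)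
        (fun g _ => ((A.cover g).choose_spec.1).1)]
    refine Finset.sum_congr rfl fun Z hZ => ?_
    rw [hbasic_eq Z hZ]
  have himgS : A.S.image f = A.S := by
    apply Finset.eq_of_subset_of_card_le
    · intro W hW
      obtain ⟨Z, hZ, rfl⟩ := Finset.mem_image.1 hW
      exact hfS Z hZ
    · rw [Finset.card_image_of_injOn (fun X hX X' hX' h => hinj X hX X' hX' h)]
  have hsum2 : ∑ Z ∈ A.S, (f Z).card = ∑ Z ∈ A.S, Z.card := by
    conv_rhs => rw [← himgS]
    rw [Finset.sum_image (fun X hX X' hX' h => hinj X hX X' hX' h)]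
  have hsum3 : ∑ Z ∈ A.S, (Z.image σ).card = ∑ Z ∈ A.S, Z.card :=
    Finset.sum_congr rfl fun Z _ => Finset.card_image_of_injective Z hσ
  have hall := (Finset.sum_eq_sum_iff_of_le
    (f := fun Z => (f Z).card) (g := fun Z => (Z.image σ).card) (s := A.S)
    (fun Z hZ => Finset.card_le_card (hfsub Z hZ))).1 (by rw [hsum2, hsum3])
  intro X hX
  have : f X = X.image σ :=
    Finset.eq_of_subset_of_card_le (hfsub X hX) (le_of_eq (hall X hX).symm)
  rw [← this]
  exact hfS X hX

end Partition

section Main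

variable {G : Type*} [Group G] [Fintype G] [DecidableEq G]

lemma image_pow_prime_mem (A : SRing G) (hA : A.IsCentral) {p : ℕ} (hp : p.Prime)
    (hpn : ¬ p ∣ Fintype.card G) {X : Finset G} (hX : X ∈ A.S) :
    X.image (fun x => x ^ p) ∈ A.S := by
  refine image_basic_mem A _ (pow_coprime_inj ((hp.coprime_iff_not_dvd).2 hpn)) ?_ X hX
  intro X' hX' Y hY g hg g' hg' hgim
  exact key_dichotomy A hA hp hpn hX' hY hg hg' hgim

lemma image_pow_mem (A : SRing G) (hA : A.IsCentral) :
    ∀ k : ℕ, 1 ≤ k → Nat.Coprime k (Fintype.card G) →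
      ∀ X ∈ A.S, X.image (fun x => x ^ k) ∈ A.S := by
  intro k
  induction k using Nat.strong_induction_on with
  | _ k ih =>
    intro hk1 hcop X hX
    rcases eq_or_lt_of_le hk1 with h1 | h2
    · have himok : X.image (fun x : G => x ^ k) = X := by
        rw [← h1]
        simp
      rwa [himok]
    · set p := k.minFac with hpdef
      have hp : p.Prime := Nat.minFac_prime (by omega)
      have hpd : p ∣ k := Nat.minFac_dvd k
      set j := k / p with hjdef
      have hjk : j * p = k := Nat.div_mul_cancel hpd
      have hj1 : 1 ≤ j := by
        rcases Nat.eq_zero_or_pos j with h | h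
        · rw [h, zero_mul] at hjk; omega
        · exact h
      have hjlt : j < k := Nat.div_lt_self (by omega) hp.one_lt
      have hjcop : Nat.Coprime j (Fintype.card G) :=
        Nat.Coprime.coprime_dvd_left ⟨p, hjk.symm⟩ hcop
      have hpn : ¬ p ∣ Fintype.card G := by
        intro hd
        have hdg : p ∣ Nat.gcd k (Fintype.card G) := Nat.dvd_gcd hpd hd
        rw [hcop] at hdg
        exact hp.ne_one (Nat.dvd_one.1 hdg)
      have himg : X.image (fun x : G => x ^ k)
          = (X.image (fun x => x ^ j)).image (fun x => x ^ p) := by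
        rw [Finset.image_image]
        have hfun : ((fun x : G => x ^ p) ∘ fun x : G => x ^ j) = fun x : G => x ^ k := by
          funext x
          show (x ^ j) ^ p = x ^ k
          rw [← pow_mul, hjk]
        rw [hfun]
      rw [himg]
      exact image_pow_prime_mem A hA hp hpn (ih j hjlt hj1 hjcop X hX)

lemma int_gcd_emod (m n : ℤ) : Int.gcd (m % n) n = Int.gcd m n := by
  have hm : m = m % n + n * (m / n) := by rw [Int.emod_def]; ring
  apply Nat.dvd_antisymm
  · rw [← Int.natCast_dvd_natCast]
    apply Int.dvd_coe_gcd
    · calc (Int.gcd (m % n) n : ℤ) ∣ m % n + n * (m / n) :=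
        dvd_add (Int.gcd_dvd_left _ _) (Dvd.dvd.mul_right (Int.gcd_dvd_right _ _) _)
      _ = m := hm.symm
    · exact Int.gcd_dvd_right _ _
  · rw [← Int.natCast_dvd_natCast]
    apply Int.dvd_coe_gcd
    · have : m % n = m - n * (m / n) := by rw [Int.emod_def]
      rw [this]
      exact dvd_sub (Int.gcd_dvd_left _ _) (Dvd.dvd.mul_right (Int.gcd_dvd_right _ _) _)
    · exact Int.gcd_dvd_right _ _

end Main


/-- **Schur's theorem on multipliers, part 1** (Theorem 1.2, first part).
If `𝒜` is a central S-ring over a finite group `G` and `m` is an integer coprime to `|G|`,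
then `X ↦ X^{(m)} = {x^m : x ∈ X}` is a bijection of the set of basic sets of `𝒜` onto
itself; in particular every `X^{(m)}` is again a basic set. -/
theorem schur_multipliers_basic_sets {G : Type*} [Group G] [Fintype G] [DecidableEq G]
    (A : SRing G) (hA : A.IsCentral) (m : ℤ) (hm : Int.gcd m (Fintype.card G) = 1) :
    Set.BijOn (fun X : Finset G => X.image (fun x => x ^ m))
      (A.S : Set (Finset G)) (A.S : Set (Finset G)) := by
  classical
  obtain ⟨k, hk1, hkcop, hkm⟩ : ∃ k : ℕ, 1 ≤ k ∧ Nat.Coprime k (Fintype.card G) ∧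
      ∀ x : G, x ^ m = x ^ k := by
    rcases eq_or_ne (Fintype.card G) 1 with h1 | h1
    · refine ⟨1, le_refl 1, by simp [Nat.coprime_one_left], fun x => ?_⟩
      haveI : Subsingleton G := Fintype.card_le_one_iff_subsingleton.1 (by rw [h1])
      exact Subsingleton.elim _ _
    · have hn0 : (Fintype.card G : ℤ) ≠ 0 := by
        exact_mod_cast Fintype.card_ne_zero
      have hnn : (0 : ℤ) ≤ m % (Fintype.card G : ℤ) := Int.emod_nonneg m hn0
      set k := (m % (Fintype.card G : ℤ)).toNat with hkdef
      have hkz : (k : ℤ) = m % (Fintype.card G : ℤ) := Int.toNat_of_nonneg hnn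
      have hgcd : Nat.gcd k (Fintype.card G) = 1 := by
        have h2 : Int.gcd (k : ℤ) (Fintype.card G : ℤ) = Nat.gcd k (Fintype.card G) :=
          Int.gcd_natCast_natCast _ _
        rw [← h2, hkz, int_gcd_emod, hm]
      refine ⟨k, ?_, hgcd, fun x => ?_⟩
      · rcases Nat.eq_zero_or_pos k with h0 | h0
        · exfalso
          rw [h0] at hgcd
          simp only [Nat.gcd_zero_left] at hgcd
          exact h1 hgcd
        · exact h0
      · have h3 : x ^ (m % (Fintype.card G : ℤ)) = x ^ m := by
          have := zpow_mod_natCard x m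
          rwa [Nat.card_eq_fintype_card] at this
        rw [← h3, ← hkz, zpow_natCast]
  have hmaps : ∀ X ∈ A.S, X.image (fun x => x ^ m) ∈ A.S := by
    intro X hX
    have himm : X.image (fun x => x ^ m) = X.image (fun x => x ^ k) :=
      Finset.image_congr fun x _ => hkm x
    rw [himm]
    exact image_pow_mem A hA k hk1 hkcop X hX
  have hinjG : Function.Injective (fun x : G => x ^ m) := by
    have h2 : (fun x : G => x ^ m) = fun x : G => x ^ k := funext hkm
    rw [h2]
    exact pow_coprime_inj hkcop
  refine ⟨?_, ?_, ?_⟩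
  · intro X hX
    simp only [Finset.mem_coe] at hX ⊢
    exact hmaps X hX
  · intro X hX X' hX' h
    exact Finset.image_injective hinjG h
  · intro Y hY
    have himg2 : A.S.image (fun X => X.image (fun x : G => x ^ m)) = A.S := by
      apply Finset.eq_of_subset_of_card_le
      · intro W hW
        obtain ⟨Z, hZ, rfl⟩ := Finset.mem_image.1 hW
        exact hmaps Z hZ
      · rw [Finset.card_image_of_injective _ (Finset.image_injective hinjG)]
    have hY2 : Y ∈ (A.S.image (fun X => X.image (fun x : G => x ^ m)) : Set (Finset G)) := by
      rw [himg2]; exact hY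
    rw [Finset.coe_image] at hY2
    exact hY2
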